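/- For every integer n ≥ 5, the partition lattice Part(n) of all partitions of {1, 2, ..., n} is four-generated: there exists a four-element subset generating Part(n) as a lattice. -/

import Mathlib

/-- The equivalence relation on `A` whose only non-singleton block is `{a, b}`. -/
def equ {A : Type*} (a b : A) : Setoid A :=
  Relation.EqvGen.setoid (fun x y => x = a ∧ y = b)

/-- A subset `G` of a lattice generates it if the smallest sublattice containing `G`
(the lattice closure of `G`) is everything. -/
def Generates {L : Type*} [Lattice L] (G : Set L) : Prop :=
  latticeClosure G = Set.univ

namespace PartGen

/-! ### Generic lemmas about setoids and `equ` -/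

lemma le_of_rel_imp {A : Type*} {r s : Setoid A} (h : ∀ x y, r x y → s x y) : r ≤ s :=
  fun {x y} hx => h x y hx

lemma rel_of_le {A : Type*} {r s : Setoid A} (h : r ≤ s) {x y : A} (hx : r x y) : s x y :=
  Setoid.le_def.mp h hx

lemma rel_sup_left {A : Type*} {r s : Setoid A} {x y : A} (h : r x y) : (r ⊔ s) x y :=
  rel_of_le le_sup_left h

lemma rel_sup_right {A : Type*} {r s : Setoid A} {x y : A} (h : s x y) : (r ⊔ s) x y :=
  rel_of_le le_sup_right h

lemma equ_rel {A : Type*} (a b : A) : equ a b a b :=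
  Relation.EqvGen.rel a b ⟨rfl, rfl⟩

lemma equ_le {A : Type*} {a b : A} {s : Setoid A} (h : s a b) : equ a b ≤ s :=
  Setoid.eqvGen_le (by rintro x y ⟨rfl, rfl⟩; exact h)

lemma equ_iff {A : Type*} {a b x y : A} :
    equ a b x y ↔ x = y ∨ (x = a ∧ y = b) ∨ (x = b ∧ y = a) := by
  constructor
  · intro h
    induction h with
    | rel u v h => exact Or.inr (Or.inl ⟨h.1, h.2⟩)
    | refl u => exact Or.inl rfl
    | symm u v h ih => rcases ih with rfl | ⟨rfl, rfl⟩ | ⟨rfl, rfl⟩ <;> tauto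
    | trans u v w h1 h2 ih1 ih2 =>
        rcases ih1 with rfl | ⟨rfl, rfl⟩ | ⟨rfl, rfl⟩ <;>
          rcases ih2 with h' | ⟨h1', h2'⟩ | ⟨h1', h2'⟩ <;> subst_vars <;> tauto
  · rintro (rfl | ⟨rfl, rfl⟩ | ⟨rfl, rfl⟩)
    · exact Relation.EqvGen.refl _
    · exact equ_rel _ _
    · exact Relation.EqvGen.symm _ _ (equ_rel _ _)

lemma equ_comm {A : Type*} (a b : A) : equ a b = equ b a :=
  le_antisymm (equ_le (equ_iff.mpr (by tauto))) (equ_le (equ_iff.mpr (by tauto)))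

/-- The master lemma: to prove `t = u ⊓ v`, bound `u` and `v` by explicit setoids. -/
lemma eq_inf {A : Type*} (t u v R1 R2 : Setoid A)
    (h1 : t ≤ u) (h2 : t ≤ v) (hu : u ≤ R1) (hv : v ≤ R2)
    (hb : ∀ x y, R1 x y → R2 x y → t x y) : t = u ⊓ v :=
  le_antisymm (le_inf h1 h2)
    (le_of_rel_imp fun x y h => hb x y (rel_of_le hu h.1) (rel_of_le hv h.2))

/-! ### The four generators -/

def kf (n : ℕ) (f : ℕ → ℕ) : Setoid (Fin n) := Setoid.ker fun x => f x.val

lemma kf_rel {n : ℕ} {f : ℕ → ℕ} {x y : Fin n} : kf n f x y ↔ f x.val = f y.val := Iff.rfl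

def gA (n : ℕ) : Setoid (Fin n) := kf n fun v => v / 2
def gB (n : ℕ) : Setoid (Fin n) := kf n fun v => (v + 1) / 2
def gC (n : ℕ) : Setoid (Fin n) := kf n fun v => if v % 2 = 0 then 0 else v + 1
def gD (n : ℕ) : Setoid (Fin n) := kf n fun v => if v % 2 = 1 then 0 else v + 1

def Gen (n : ℕ) : Set (Setoid (Fin n)) := {gA n, gB n, gC n, gD n}

def S (n : ℕ) : Set (Setoid (Fin n)) := latticeClosure (Gen n)

lemma gA_mem {n : ℕ} : gA n ∈ S n := subset_latticeClosure (by simp [Gen])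
lemma gB_mem {n : ℕ} : gB n ∈ S n := subset_latticeClosure (by simp [Gen])
lemma gC_mem {n : ℕ} : gC n ∈ S n := subset_latticeClosure (by simp [Gen])
lemma gD_mem {n : ℕ} : gD n ∈ S n := subset_latticeClosure (by simp [Gen])

lemma inf_mem {n : ℕ} {u v : Setoid (Fin n)} (hu : u ∈ S n) (hv : v ∈ S n) : u ⊓ v ∈ S n :=
  isSublattice_latticeClosure.infClosed hu hv

lemma sup_mem {n : ℕ} {u v : Setoid (Fin n)} (hu : u ∈ S n) (hv : v ∈ S n) : u ⊔ v ∈ S n :=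
  isSublattice_latticeClosure.supClosed hu hv

lemma equ_of_val {n : ℕ} {a b x y : Fin n}
    (h : x.val = y.val ∨ (x.val = a.val ∧ y.val = b.val) ∨ (x.val = b.val ∧ y.val = a.val)) :
    equ a b x y := by
  rw [equ_iff]
  simpa only [Fin.ext_iff] using h

/-! ### Prefix-block setoids and the shrinking argument -/

/-- The setoid whose only nontrivial block is `{v : v ≡ m [2], v ≤ m}`. -/
def Pref (n m : ℕ) : Setoid (Fin n) :=
  kf n fun v => if v % 2 = m % 2 ∧ v ≤ m then 0 else v + 1

lemma pref_mem {n : ℕ} (hn : 5 ≤ n) :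
    ∀ k m : ℕ, m + k + 1 = n → 2 ≤ m → Pref n m ∈ S n := by
  intro k
  induction k with
  | zero =>
    intro m hm h2
    by_cases hp : m % 2 = 0
    · have key : Pref n m = gC n := by
        apply Setoid.ext; intro x y
        rw [Pref, gC]; simp only [kf_rel]
        have hx := x.isLt; have hy := y.isLt
        constructor <;> intro h <;> split_ifs at h ⊢ <;> omega
      rw [key]; exact gC_mem
    · have key : Pref n m = gD n := by
        apply Setoid.ext; intro x y
        rw [Pref, gD]; simp only [kf_rel]
        have hx := x.isLt; have hy := y.isLt
        constructor <;> intro h <;> split_ifs at h ⊢ <;> omega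
      rw [key]; exact gD_mem
  | succ k IH =>
    intro m hm h2
    have hP1 : Pref n (m + 1) ∈ S n := IH (m + 1) (by omega) (by omega)
    by_cases hp : m % 2 = 0
    · have key : Pref n m = gC n ⊓ (Pref n (m + 1) ⊔ gA n) := by
        apply eq_inf _ _ _ (gC n) (kf n fun v => if v ≤ m + 1 then 0 else v / 2 + 1)
        · apply le_of_rel_imp; intro x y h
          rw [Pref] at h; simp only [kf_rel] at h
          rw [gC]; simp only [kf_rel]
          split_ifs at h ⊢ <;> omega
        · apply le_of_rel_imp; intro x y h
          rw [Pref] at h; simp only [kf_rel] at h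
          by_cases hxy : x.val = y.val
          · obtain rfl : x = y := Fin.ext hxy
            exact Setoid.refl' _ _
          · have hx : x.val % 2 = m % 2 ∧ x.val ≤ m ∧ y.val % 2 = m % 2 ∧ y.val ≤ m := by
              split_ifs at h <;> omega
            have hx1 : x.val + 1 < n := by omega
            have hy1 : y.val + 1 < n := by omega
            have c1 : gA n x ⟨x.val + 1, hx1⟩ :=
              kf_rel.mpr (show x.val / 2 = (x.val + 1) / 2 by omega)
            have c2 : Pref n (m + 1) ⟨x.val + 1, hx1⟩ ⟨y.val + 1, hy1⟩ := by
              refine kf_rel.mpr ?_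
              show (if (x.val + 1) % 2 = (m + 1) % 2 ∧ x.val + 1 ≤ m + 1 then 0 else x.val + 1 + 1)
                = (if (y.val + 1) % 2 = (m + 1) % 2 ∧ y.val + 1 ≤ m + 1 then 0 else y.val + 1 + 1)
              split_ifs <;> omega
            have c3 : gA n ⟨y.val + 1, hy1⟩ y :=
              kf_rel.mpr (show (y.val + 1) / 2 = y.val / 2 by omega)
            exact Setoid.trans' _ (rel_sup_right c1)
              (Setoid.trans' _ (rel_sup_left c2) (rel_sup_right c3))
        · exact le_refl _
        · apply sup_le
          · apply le_of_rel_imp; intro x y h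
            rw [Pref] at h; simp only [kf_rel] at h
            simp only [kf_rel]
            split_ifs at h ⊢ <;> omega
          · apply le_of_rel_imp; intro x y h
            rw [gA] at h; simp only [kf_rel] at h
            simp only [kf_rel]
            split_ifs <;> omega
        · intro x y h1 h2
          rw [gC] at h1; simp only [kf_rel] at h1
          simp only [kf_rel] at h2
          rw [Pref]; simp only [kf_rel]
          split_ifs at h1 h2 ⊢ <;> omega
      rw [key]; exact inf_mem gC_mem (sup_mem hP1 gA_mem)
    · have key : Pref n m = gD n ⊓ (Pref n (m + 1) ⊔ gB n) := by
        apply eq_inf _ _ _ (gD n) (kf n fun v => if v ≤ m + 1 then 0 else (v + 1) / 2 + 1)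
        · apply le_of_rel_imp; intro x y h
          rw [Pref] at h; simp only [kf_rel] at h
          rw [gD]; simp only [kf_rel]
          split_ifs at h ⊢ <;> omega
        · apply le_of_rel_imp; intro x y h
          rw [Pref] at h; simp only [kf_rel] at h
          by_cases hxy : x.val = y.val
          · obtain rfl : x = y := Fin.ext hxy
            exact Setoid.refl' _ _
          · have hx : x.val % 2 = m % 2 ∧ x.val ≤ m ∧ y.val % 2 = m % 2 ∧ y.val ≤ m := by
              split_ifs at h <;> omega
            have hx1 : x.val + 1 < n := by omega
            have hy1 : y.val + 1 < n := by omega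
            have c1 : gB n x ⟨x.val + 1, hx1⟩ :=
              kf_rel.mpr (show (x.val + 1) / 2 = (x.val + 1 + 1) / 2 by omega)
            have c2 : Pref n (m + 1) ⟨x.val + 1, hx1⟩ ⟨y.val + 1, hy1⟩ := by
              refine kf_rel.mpr ?_
              show (if (x.val + 1) % 2 = (m + 1) % 2 ∧ x.val + 1 ≤ m + 1 then 0 else x.val + 1 + 1)
                = (if (y.val + 1) % 2 = (m + 1) % 2 ∧ y.val + 1 ≤ m + 1 then 0 else y.val + 1 + 1)
              split_ifs <;> omega
            have c3 : gB n ⟨y.val + 1, hy1⟩ y :=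
              kf_rel.mpr (show (y.val + 1 + 1) / 2 = (y.val + 1) / 2 by omega)
            exact Setoid.trans' _ (rel_sup_right c1)
              (Setoid.trans' _ (rel_sup_left c2) (rel_sup_right c3))
        · exact le_refl _
        · apply sup_le
          · apply le_of_rel_imp; intro x y h
            rw [Pref] at h; simp only [kf_rel] at h
            simp only [kf_rel]
            split_ifs at h ⊢ <;> omega
          · apply le_of_rel_imp; intro x y h
            rw [gB] at h; simp only [kf_rel] at h
            simp only [kf_rel]
            split_ifs <;> omega
        · intro x y h1 h2
          rw [gD] at h1; simp only [kf_rel] at h1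
          simp only [kf_rel] at h2
          rw [Pref]; simp only [kf_rel]
          split_ifs at h1 h2 ⊢ <;> omega
      rw [key]; exact inf_mem gD_mem (sup_mem hP1 gB_mem)

/-! ### The atoms `equ a b` are all in the sublattice -/

lemma equ02_mem {n : ℕ} (hn : 5 ≤ n) (a b : Fin n) (ha : a.val = 0) (hb : b.val = 2) :
    equ a b ∈ S n := by
  have key : equ a b = Pref n 2 := by
    apply le_antisymm
    · refine equ_le (kf_rel.mpr ?_)
      show (if a.val % 2 = 2 % 2 ∧ a.val ≤ 2 then 0 else a.val + 1)
        = (if b.val % 2 = 2 % 2 ∧ b.val ≤ 2 then 0 else b.val + 1)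
      split_ifs <;> omega
    · apply le_of_rel_imp; intro x y h
      apply equ_of_val
      rw [Pref] at h; simp only [kf_rel] at h
      split_ifs at h <;> omega
  rw [key]; exact pref_mem hn (n - 3) 2 (by omega) (by omega)

lemma equ01_mem {n : ℕ} (hn : 5 ≤ n) (a b : Fin n) (ha : a.val = 0) (hb : b.val = 1) :
    equ a b ∈ S n := by
  have hP : Pref n 2 ∈ S n := pref_mem hn (n - 3) 2 (by omega) (by omega)
  have key : equ a b = gA n ⊓ (Pref n 2 ⊔ gB n) := by
    apply eq_inf _ _ _ (gA n) (kf n fun v => if v ≤ 2 then 0 else (v + 1) / 2 + 1)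
    · exact equ_le (kf_rel.mpr (show a.val / 2 = b.val / 2 by omega))
    · apply equ_le
      have c1 : Pref n 2 a ⟨2, by omega⟩ := kf_rel.mpr (by
        show (if a.val % 2 = 2 % 2 ∧ a.val ≤ 2 then 0 else a.val + 1)
          = (if 2 % 2 = 2 % 2 ∧ 2 ≤ 2 then 0 else 2 + 1)
        split_ifs <;> omega)
      have c2 : gB n ⟨2, by omega⟩ b := kf_rel.mpr (show (2 + 1) / 2 = (b.val + 1) / 2 by omega)
      exact Setoid.trans' _ (rel_sup_left c1) (rel_sup_right c2)
    · exact le_refl _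
    · apply sup_le
      · apply le_of_rel_imp; intro x y h
        rw [Pref] at h; simp only [kf_rel] at h
        simp only [kf_rel]
        split_ifs at h ⊢ <;> omega
      · apply le_of_rel_imp; intro x y h
        rw [gB] at h; simp only [kf_rel] at h
        simp only [kf_rel]
        split_ifs <;> omega
    · intro x y h1 h2
      apply equ_of_val
      rw [gA] at h1; simp only [kf_rel] at h1
      simp only [kf_rel] at h2
      split_ifs at h2 <;> omega
  rw [key]; exact inf_mem gA_mem (sup_mem hP gB_mem)

lemma equ12_mem {n : ℕ} (hn : 5 ≤ n) (a b : Fin n) (ha : a.val = 1) (hb : b.val = 2) :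
    equ a b ∈ S n := by
  have hP : Pref n 3 ∈ S n := pref_mem hn (n - 4) 3 (by omega) (by omega)
  have key : equ a b = gB n ⊓ (Pref n 3 ⊔ gA n) := by
    apply eq_inf _ _ _ (gB n) (kf n fun v => if v ≤ 3 then 0 else v / 2 + 2)
    · exact equ_le (kf_rel.mpr (show (a.val + 1) / 2 = (b.val + 1) / 2 by omega))
    · apply equ_le
      have c1 : Pref n 3 a ⟨3, by omega⟩ := kf_rel.mpr (by
        show (if a.val % 2 = 3 % 2 ∧ a.val ≤ 3 then 0 else a.val + 1)
          = (if 3 % 2 = 3 % 2 ∧ 3 ≤ 3 then 0 else 3 + 1)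
        split_ifs <;> omega)
      have c2 : gA n ⟨3, by omega⟩ b := kf_rel.mpr (show 3 / 2 = b.val / 2 by omega)
      exact Setoid.trans' _ (rel_sup_left c1) (rel_sup_right c2)
    · exact le_refl _
    · apply sup_le
      · apply le_of_rel_imp; intro x y h
        rw [Pref] at h; simp only [kf_rel] at h
        simp only [kf_rel]
        split_ifs at h ⊢ <;> omega
      · apply le_of_rel_imp; intro x y h
        rw [gA] at h; simp only [kf_rel] at h
        simp only [kf_rel]
        split_ifs <;> omega
    · intro x y h1 h2
      apply equ_of_val
      rw [gB] at h1; simp only [kf_rel] at h1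
      simp only [kf_rel] at h2
      split_ifs at h2 <;> omega
  rw [key]; exact inf_mem gB_mem (sup_mem hP gA_mem)

/-- From `equ a b`, `equ a c` (with `a, b, c` consecutive, `b.val ≥ 2`) get `equ b c`. -/
lemma adj_step_mem {n : ℕ} {a b c : Fin n} (hab : a.val + 1 = b.val) (hbc : b.val + 1 = c.val)
    (h2 : 2 ≤ b.val) (hSab : equ a b ∈ S n) (hSac : equ a c ∈ S n) : equ b c ∈ S n := by
  by_cases hp : b.val % 2 = 0
  · have key : equ b c = gA n ⊓ (equ a b ⊔ equ a c) := by
      apply eq_inf _ _ _ (gA n)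
        (kf n fun v => if b.val - 1 ≤ v ∧ v ≤ b.val + 1 then 0 else v + 1)
      · exact equ_le (kf_rel.mpr (show b.val / 2 = c.val / 2 by omega))
      · exact equ_le (Setoid.trans' _ (rel_sup_left (Setoid.symm' _ (equ_rel a b)))
          (rel_sup_right (equ_rel a c)))
      · exact le_refl _
      · apply sup_le
        · exact equ_le (kf_rel.mpr (by split_ifs <;> omega))
        · exact equ_le (kf_rel.mpr (by split_ifs <;> omega))
      · intro x y h1 h2'
        apply equ_of_val
        rw [gA] at h1; simp only [kf_rel] at h1
        simp only [kf_rel] at h2'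
        split_ifs at h2' <;> omega
    rw [key]; exact inf_mem gA_mem (sup_mem hSab hSac)
  · have key : equ b c = gB n ⊓ (equ a b ⊔ equ a c) := by
      apply eq_inf _ _ _ (gB n)
        (kf n fun v => if b.val - 1 ≤ v ∧ v ≤ b.val + 1 then 0 else v + 1)
      · exact equ_le (kf_rel.mpr (show (b.val + 1) / 2 = (c.val + 1) / 2 by omega))
      · exact equ_le (Setoid.trans' _ (rel_sup_left (Setoid.symm' _ (equ_rel a b)))
          (rel_sup_right (equ_rel a c)))
      · exact le_refl _
      · apply sup_le
        · exact equ_le (kf_rel.mpr (by split_ifs <;> omega))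
        · exact equ_le (kf_rel.mpr (by split_ifs <;> omega))
      · intro x y h1 h2'
        apply equ_of_val
        rw [gB] at h1; simp only [kf_rel] at h1
        simp only [kf_rel] at h2'
        split_ifs at h2' <;> omega
    rw [key]; exact inf_mem gB_mem (sup_mem hSab hSac)

/-- From `equ a b` (with `a, b, c` consecutive) get `equ a c`. -/
lemma dist2_mem {n : ℕ} {a b c : Fin n} (hab : a.val + 1 = b.val) (hbc : b.val + 1 = c.val)
    (hSab : equ a b ∈ S n) : equ a c ∈ S n := by
  by_cases hp : a.val % 2 = 0
  · have key : equ a c = gC n ⊓ (equ a b ⊔ gB n) := by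
      apply eq_inf _ _ _ (gC n)
        (kf n fun v => if a.val ≤ v + 1 ∧ v ≤ a.val + 2 then 0 else (v + 1) / 2 + 1)
      · refine equ_le (kf_rel.mpr ?_)
        show (if a.val % 2 = 0 then 0 else a.val + 1) = (if c.val % 2 = 0 then 0 else c.val + 1)
        split_ifs <;> omega
      · refine equ_le (Setoid.trans' _ (rel_sup_left (equ_rel a b)) (rel_sup_right ?_))
        exact kf_rel.mpr (show (b.val + 1) / 2 = (c.val + 1) / 2 by omega)
      · exact le_refl _
      · apply sup_le
        · exact equ_le (kf_rel.mpr (by split_ifs <;> omega))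
        · apply le_of_rel_imp; intro x y h
          rw [gB] at h; simp only [kf_rel] at h
          simp only [kf_rel]
          split_ifs <;> omega
      · intro x y h1 h2'
        apply equ_of_val
        rw [gC] at h1; simp only [kf_rel] at h1
        simp only [kf_rel] at h2'
        split_ifs at h1 h2' <;> omega
    rw [key]; exact inf_mem gC_mem (sup_mem hSab gB_mem)
  · have key : equ a c = gD n ⊓ (equ a b ⊔ gA n) := by
      apply eq_inf _ _ _ (gD n)
        (kf n fun v => if a.val ≤ v + 1 ∧ v ≤ a.val + 2 then 0 else v / 2 + 1)
      · refine equ_le (kf_rel.mpr ?_)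
        show (if a.val % 2 = 1 then 0 else a.val + 1) = (if c.val % 2 = 1 then 0 else c.val + 1)
        split_ifs <;> omega
      · refine equ_le (Setoid.trans' _ (rel_sup_left (equ_rel a b)) (rel_sup_right ?_))
        exact kf_rel.mpr (show b.val / 2 = c.val / 2 by omega)
      · exact le_refl _
      · apply sup_le
        · exact equ_le (kf_rel.mpr (by split_ifs <;> omega))
        · apply le_of_rel_imp; intro x y h
          rw [gA] at h; simp only [kf_rel] at h
          simp only [kf_rel]
          split_ifs <;> omega
      · intro x y h1 h2'
        apply equ_of_val
        rw [gD] at h1; simp only [kf_rel] at h1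
        simp only [kf_rel] at h2'
        split_ifs at h1 h2' <;> omega
    rw [key]; exact inf_mem gD_mem (sup_mem hSab gA_mem)

/-- The two-disjoint-paths trick for distance at least 3. -/
lemma dist3_mem {n : ℕ} {a p q b : Fin n} (hap : a.val + 1 = p.val) (haq : a.val + 2 = q.val)
    (hd : a.val + 3 ≤ b.val) (h1 : equ a p ∈ S n) (h2 : equ a q ∈ S n)
    (h3 : equ p b ∈ S n) (h4 : equ q b ∈ S n) : equ a b ∈ S n := by
  have key : equ a b = (equ a p ⊔ equ p b) ⊓ (equ a q ⊔ equ q b) := by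
    apply eq_inf _ _ _
      (kf n fun v => if v = a.val ∨ v = p.val ∨ v = b.val then 0 else v + 1)
      (kf n fun v => if v = a.val ∨ v = q.val ∨ v = b.val then 0 else v + 1)
    · exact equ_le (Setoid.trans' _ (rel_sup_left (equ_rel a p)) (rel_sup_right (equ_rel p b)))
    · exact equ_le (Setoid.trans' _ (rel_sup_left (equ_rel a q)) (rel_sup_right (equ_rel q b)))
    · apply sup_le
      · exact equ_le (kf_rel.mpr (by split_ifs <;> omega))
      · exact equ_le (kf_rel.mpr (by split_ifs <;> omega))
    · apply sup_le
      · exact equ_le (kf_rel.mpr (by split_ifs <;> omega))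
      · exact equ_le (kf_rel.mpr (by split_ifs <;> omega))
    · intro x y hx hy
      apply equ_of_val
      simp only [kf_rel] at hx hy
      split_ifs at hx hy <;> omega
  rw [key]
  exact inf_mem (sup_mem h1 h3) (sup_mem h2 h4)

lemma base_mem {n : ℕ} (hn : 5 ≤ n) : ∀ j : ℕ,
    (∀ a b : Fin n, a.val = j → b.val = j + 1 → equ a b ∈ S n) ∧
    (∀ a b : Fin n, a.val = j → b.val = j + 2 → equ a b ∈ S n) := by
  intro j
  induction j with
  | zero =>
    exact ⟨fun a b ha hb => equ01_mem hn a b ha hb,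
           fun a b ha hb => equ02_mem hn a b ha hb⟩
  | succ j IH =>
    have adj : ∀ a b : Fin n, a.val = j + 1 → b.val = j + 1 + 1 → equ a b ∈ S n := by
      intro a b ha hb
      rcases Nat.eq_zero_or_pos j with rfl | hj
      · exact equ12_mem hn a b ha hb
      · have hjb : j < n := by have := b.isLt; omega
        exact adj_step_mem (a := ⟨j, hjb⟩) (show j + 1 = a.val by omega)
          (show a.val + 1 = b.val by omega) (by omega)
          (IH.1 ⟨j, hjb⟩ a rfl ha) (IH.2 ⟨j, hjb⟩ b rfl hb)
    refine ⟨adj, fun a b ha hb => ?_⟩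
    have hm : j + 2 < n := by have := b.isLt; omega
    exact dist2_mem (b := ⟨j + 2, hm⟩) (show a.val + 1 = j + 2 by omega)
      (show j + 2 + 1 = b.val by omega) (adj a ⟨j + 2, hm⟩ ha rfl)

lemma pair_mem {n : ℕ} (hn : 5 ≤ n) :
    ∀ d : ℕ, ∀ a b : Fin n, b.val = a.val + d → 1 ≤ d → equ a b ∈ S n := by
  intro d
  induction d using Nat.strong_induction_on with
  | _ d IH =>
    intro a b hab hd
    rcases d with _ | _ | _ | e
    · exact absurd hd (by omega)
    · exact (base_mem hn a.val).1 a b rfl (by omega)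
    · exact (base_mem hn a.val).2 a b rfl (by omega)
    · have h1 : a.val + 1 < n := by have := b.isLt; omega
      have h2 : a.val + 2 < n := by have := b.isLt; omega
      refine dist3_mem (p := ⟨a.val + 1, h1⟩) (q := ⟨a.val + 2, h2⟩) rfl rfl
        (by omega) ?_ ?_ ?_ ?_
      · exact (base_mem hn a.val).1 a _ rfl rfl
      · exact (base_mem hn a.val).2 a _ rfl rfl
      · exact IH (e + 2) (by omega) ⟨a.val + 1, h1⟩ b (show b.val = a.val + 1 + (e + 2) by omega) (by omega)
      · exact IH (e + 1) (by omega) ⟨a.val + 2, h2⟩ b (show b.val = a.val + 2 + (e + 1) by omega) (by omega)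

lemma bot_mem {n : ℕ} : (⊥ : Setoid (Fin n)) ∈ S n := by
  have key : (⊥ : Setoid (Fin n)) = gA n ⊓ gC n := by
    apply le_antisymm bot_le
    apply le_of_rel_imp; intro x y h
    have h1 := h.1; have h2 := h.2
    rw [gA] at h1; simp only [kf_rel] at h1
    rw [gC] at h2; simp only [kf_rel] at h2
    simp only [Setoid.bot_def]
    apply Fin.ext
    split_ifs at h2 <;> omega
  rw [key]; exact inf_mem gA_mem gC_mem

lemma equ_mem {n : ℕ} (hn : 5 ≤ n) (a b : Fin n) : equ a b ∈ S n := by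
  rcases lt_trichotomy a.val b.val with h | h | h
  · exact pair_mem hn (b.val - a.val) a b (by omega) (by omega)
  · obtain rfl : a = b := Fin.ext h
    have key : equ a a = (⊥ : Setoid (Fin n)) :=
      le_antisymm (equ_le (Setoid.refl' _ _)) bot_le
    rw [key]; exact bot_mem
  · rw [equ_comm]; exact pair_mem hn (a.val - b.val) b a (by omega) (by omega)

lemma setoid_mem {n : ℕ} (hn : 5 ≤ n) (s : Setoid (Fin n)) : s ∈ S n := by
  classical
  set T : Finset (Fin n × Fin n) := Finset.univ.filter (fun p => s p.1 p.2) with hT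
  have h0 : (0 : ℕ) < n := by omega
  have hne : T.Nonempty := ⟨(⟨0, h0⟩, ⟨0, h0⟩), by
    simp only [hT, Finset.mem_filter, Finset.mem_univ, true_and]
    exact Setoid.refl' s _⟩
  have key : s = T.sup' hne (fun p => equ p.1 p.2) := by
    apply le_antisymm
    · apply le_of_rel_imp; intro x y h
      have hmem : (x, y) ∈ T := by
        simp only [hT, Finset.mem_filter, Finset.mem_univ, true_and]
        exact h
      exact rel_of_le (Finset.le_sup' (f := fun p => equ p.1 p.2) hmem) (equ_rel x y)
    · apply Finset.sup'_le
      intro p hp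
      exact equ_le (Finset.mem_filter.mp hp).2
  rw [key]
  exact isSublattice_latticeClosure.supClosed.finsetSup'_mem hne (fun p _ => equ_mem hn p.1 p.2)

lemma rel_ne {n : ℕ} {r s : Setoid (Fin n)} {x y : Fin n} (h1 : r x y) (h2 : ¬ s x y) : r ≠ s :=
  fun h => h2 (h ▸ h1)

end PartGen

open PartGen in
/-- For n ≥ 5 the partition lattice Part(n) ≅ Equ(n) is four-generated. -/
theorem part_four_generated {n : ℕ} (hn : 5 ≤ n) :
    ∃ G : Set (Setoid (Fin n)), G.ncard = 4 ∧ Generates G := by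
  refine ⟨Gen n, ?_, ?_⟩
  · set x0 : Fin n := ⟨0, by omega⟩ with hx0
    set x1 : Fin n := ⟨1, by omega⟩ with hx1
    set x2 : Fin n := ⟨2, by omega⟩ with hx2
    set x3 : Fin n := ⟨3, by omega⟩ with hx3
    have rA01 : gA n x0 x1 := kf_rel.mpr (show (0 : ℕ) / 2 = 1 / 2 by norm_num)
    have rB01 : ¬ gB n x0 x1 := fun h => by
      have := kf_rel.mp h
      norm_num [hx0, hx1] at this
    have rC01 : ¬ gC n x0 x1 := fun h => by
      have := kf_rel.mp h
      norm_num [hx0, hx1] at this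
    have rD01 : ¬ gD n x0 x1 := fun h => by
      have := kf_rel.mp h
      norm_num [hx0, hx1] at this
    have rC02 : gC n x0 x2 := kf_rel.mpr (by norm_num)
    have rB02 : ¬ gB n x0 x2 := fun h => by
      have := kf_rel.mp h
      norm_num [hx0, hx2] at this
    have rD02 : ¬ gD n x0 x2 := fun h => by
      have := kf_rel.mp h
      norm_num [hx0, hx2] at this
    have rD13 : gD n x1 x3 := kf_rel.mpr (by norm_num)
    have rB13 : ¬ gB n x1 x3 := fun h => by
      have := kf_rel.mp h
      norm_num [hx1, hx3] at this
    have hAB : gA n ≠ gB n := rel_ne rA01 rB01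
    have hAC : gA n ≠ gC n := rel_ne rA01 rC01
    have hAD : gA n ≠ gD n := rel_ne rA01 rD01
    have hBC : gB n ≠ gC n := (rel_ne rC02 rB02).symm
    have hBD : gB n ≠ gD n := (rel_ne rD13 rB13).symm
    have hCD : gC n ≠ gD n := rel_ne rC02 rD02
    show ({gA n, gB n, gC n, gD n} : Set (Setoid (Fin n))).ncard = 4
    rw [Set.ncard_insert_of_notMem (by simp [hAB, hAC, hAD]),
      Set.ncard_insert_of_notMem (by simp [hBC, hBD]), Set.ncard_pair hCD]
  · show latticeClosure (Gen n) = Set.univ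
    exact Set.eq_univ_of_forall (setoid_mem hn)
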